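/- Each Rauzy induction move r_ε (ε ∈ {0,1}) is a bijection from the set of irreducible permutations of {1,…,d} to itself; consequently, for every irreducible π and every ε there exists n > 0 with r_ε^n(π) = π. -/

import Mathlib

private lemma rauzy_iter_ret {α : Type*} [Finite α] (f : α → α) (hf : Function.Bijective f) :
    ∀ x, ∃ n : ℕ, 0 < n ∧ f^[n] x = x := by
  intro x
  let e : Equiv.Perm α := Equiv.ofBijective f hf
  refine ⟨orderOf e, orderOf_pos e, ?_⟩
  have h1 : e ^ orderOf e = 1 := pow_orderOf_eq_one e
  have h2 : f^[orderOf e] x = (e ^ orderOf e) x := by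
    show (⇑e)^[orderOf e] x = _
    rw [Equiv.Perm.iterate_eq_pow]
  rw [h2, h1]; rfl

/-- Irreducibility of a permutation of `{1,…,d}` (0-indexed). -/
def RauzyIrreducible (d : ℕ) (π : Equiv.Perm (Fin d)) : Prop :=
  ∀ k : ℕ, 1 ≤ k → k < d → ¬ (∀ i : Fin d, i.val < k → (π i).val < k)

private lemma rauzy_last_lt (d : ℕ) (hd : 2 ≤ d) (π : Equiv.Perm (Fin d))
    (hπ : RauzyIrreducible d π) : (π ⟨d - 1, Nat.sub_lt (by omega) Nat.one_pos⟩).val < d - 1 := by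
  by_contra h
  have hlt := (π ⟨d - 1, by omega⟩).isLt
  have heq : π ⟨d - 1, by omega⟩ = ⟨d - 1, by omega⟩ := by
    apply Fin.ext; simp only [Fin.val_mk]; omega
  apply hπ (d - 1) (by omega) (by omega)
  intro i hi
  have hne : π i ≠ ⟨d - 1, by omega⟩ := by
    rw [← heq]
    intro hc
    have := congrArg Fin.val (π.injective hc)
    simp only [Fin.val_mk] at this
    omega
  have : (π i).val ≠ d - 1 := fun hc => hne (Fin.ext hc)
  have := (π i).isLt
  omega

private lemma rauzy_symm_last_lt (d : ℕ) (hd : 2 ≤ d) (π : Equiv.Perm (Fin d))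
    (hπ : RauzyIrreducible d π) : (π.symm ⟨d - 1, Nat.sub_lt (by omega) Nat.one_pos⟩).val < d - 1 := by
  by_contra hc
  have hlt := (π.symm ⟨d - 1, by omega⟩).isLt
  have h1 : π.symm ⟨d - 1, by omega⟩ = ⟨d - 1, by omega⟩ := by
    apply Fin.ext; simp only [Fin.val_mk]; omega
  have hfix : π ⟨d - 1, by omega⟩ = ⟨d - 1, by omega⟩ := by
    conv_lhs => rw [← h1]
    exact π.apply_symm_apply _
  have := rauzy_last_lt d hd π hπ
  rw [hfix] at this
  simp only [Fin.val_mk] at this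
  omega

/-- Each Rauzy induction move is a bijection of the set of irreducible
permutations of `{1,…,d}` to itself; consequently each irreducible `π` is
recurrent under each move: some positive iterate returns to `π`.  Here `Rb`
is the bottom move (value-shifting rule) and `Rt` the top move
(position-shifting rule), both 0-indexed, acting on the subtype of
irreducible permutations. -/
theorem rauzy_moves_bijective_and_recurrent (d : ℕ) (hd : 2 ≤ d)
    (Rb Rt : {π : Equiv.Perm (Fin d) // RauzyIrreducible d π} →
      {π : Equiv.Perm (Fin d) // RauzyIrreducible d π})
    (hRb : ∀ π : {π : Equiv.Perm (Fin d) // RauzyIrreducible d π}, ∀ j : Fin d,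
      (((Rb π).val) j).val =
        if (π.val j).val ≤ (π.val ⟨d - 1, by omega⟩).val then (π.val j).val
        else if (π.val j).val < d - 1 then (π.val j).val + 1
        else (π.val ⟨d - 1, by omega⟩).val + 1)
    (hRt : ∀ π : {π : Equiv.Perm (Fin d) // RauzyIrreducible d π}, ∀ j : Fin d,
      (j.val ≤ (π.val.symm ⟨d - 1, by omega⟩).val → (Rt π).val j = π.val j) ∧
      (j.val = (π.val.symm ⟨d - 1, by omega⟩).val + 1 →
        (Rt π).val j = π.val ⟨d - 1, by omega⟩) ∧
      ((π.val.symm ⟨d - 1, by omega⟩).val + 1 < j.val →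
        (Rt π).val j = π.val ⟨j.val - 1, lt_of_le_of_lt (Nat.sub_le _ _) j.isLt⟩)) :
    Function.Bijective Rb ∧ Function.Bijective Rt ∧
    (∀ π, ∃ n : ℕ, 0 < n ∧ Rb^[n] π = π) ∧
    (∀ π, ∃ n : ℕ, 0 < n ∧ Rt^[n] π = π) := by
  have hbinj : Function.Injective Rb := by
    intro π π' h
    have el := hRb π ⟨d - 1, by omega⟩
    rw [if_pos le_rfl] at el
    have el' := hRb π' ⟨d - 1, by omega⟩
    rw [if_pos le_rfl] at el'
    have hl : ((Rb π).val ⟨d - 1, by omega⟩).val = ((Rb π').val ⟨d - 1, by omega⟩).val :=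
      congrArg (fun σ => ((σ.val) ⟨d - 1, by omega⟩).val) h
    have hmm : (π.val ⟨d - 1, by omega⟩).val = (π'.val ⟨d - 1, by omega⟩).val := by omega
    have hm : (π.val ⟨d - 1, by omega⟩).val < d - 1 := rauzy_last_lt d hd π.val π.2
    have hm' : (π'.val ⟨d - 1, by omega⟩).val < d - 1 := rauzy_last_lt d hd π'.val π'.2
    apply Subtype.ext
    apply Equiv.ext
    intro j
    apply Fin.ext
    have e1 := hRb π j
    have e2 := hRb π' j
    have heq : (((Rb π).val) j).val = (((Rb π').val) j).val :=
      congrArg (fun σ => ((σ.val) j).val) h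
    rw [e1, e2] at heq
    have h1 := (π.val j).isLt
    have h2 := (π'.val j).isLt
    split_ifs at heq <;> omega
  have htinj : Function.Injective Rt := by
    intro π π' h
    have hp : (π.val.symm ⟨d - 1, by omega⟩).val < d - 1 :=
      rauzy_symm_last_lt d hd π.val π.2
    have hp' : (π'.val.symm ⟨d - 1, by omega⟩).val < d - 1 :=
      rauzy_symm_last_lt d hd π'.val π'.2
    have hσp : (Rt π).val (π.val.symm ⟨d - 1, by omega⟩) = ⟨d - 1, by omega⟩ :=
      ((hRt π (π.val.symm ⟨d - 1, by omega⟩)).1 le_rfl).trans (π.val.apply_symm_apply _)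
    have hσp' : (Rt π').val (π'.val.symm ⟨d - 1, by omega⟩) = ⟨d - 1, by omega⟩ :=
      ((hRt π' (π'.val.symm ⟨d - 1, by omega⟩)).1 le_rfl).trans (π'.val.apply_symm_apply _)
    have hc : (Rt π).val (π'.val.symm ⟨d - 1, by omega⟩) = ⟨d - 1, by omega⟩ :=
      (congrArg (fun σ => σ.val (π'.val.symm ⟨d - 1, by omega⟩)) h).trans hσp'
    have hpp : π.val.symm ⟨d - 1, by omega⟩ = π'.val.symm ⟨d - 1, by omega⟩ :=
      (Rt π).val.injective (hσp.trans hc.symm)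
    have hppv : (π.val.symm ⟨d - 1, by omega⟩).val = (π'.val.symm ⟨d - 1, by omega⟩).val :=
      congrArg Fin.val hpp
    apply Subtype.ext
    apply Equiv.ext
    intro j
    rcases le_or_gt j.val (π.val.symm ⟨d - 1, by omega⟩).val with hle | hgt
    · calc π.val j = (Rt π).val j := ((hRt π j).1 hle).symm
        _ = (Rt π').val j := congrArg (fun σ => σ.val j) h
        _ = π'.val j := (hRt π' j).1 (by omega)
    · rcases lt_or_ge j.val (d - 1) with hjlt | hjge
      · have hj1 : j.val + 1 < d := by omega
        have e1 := (hRt π ⟨j.val + 1, hj1⟩).2.2 (by simp only [Fin.val_mk]; omega)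
        have e2 := (hRt π' ⟨j.val + 1, hj1⟩).2.2 (by simp only [Fin.val_mk]; omega)
        have hjj : (⟨(⟨j.val + 1, hj1⟩ : Fin d).val - 1,
            lt_of_le_of_lt (Nat.sub_le _ _) (⟨j.val + 1, hj1⟩ : Fin d).isLt⟩ : Fin d) = j := by
          apply Fin.ext; simp only [Fin.val_mk]; omega
        rw [hjj] at e1 e2
        calc π.val j = (Rt π).val ⟨j.val + 1, hj1⟩ := e1.symm
          _ = (Rt π').val ⟨j.val + 1, hj1⟩ := congrArg (fun σ => σ.val ⟨j.val + 1, hj1⟩) h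
          _ = π'.val j := e2
      · have hj : j = ⟨d - 1, by omega⟩ := by
          apply Fin.ext; simp only [Fin.val_mk]; have := j.isLt; omega
        have hi1 : (π.val.symm ⟨d - 1, by omega⟩).val + 1 < d := by omega
        have e1 := (hRt π ⟨(π.val.symm ⟨d - 1, by omega⟩).val + 1, hi1⟩).2.1
          (by simp only [Fin.val_mk])
        have e2 := (hRt π' ⟨(π.val.symm ⟨d - 1, by omega⟩).val + 1, hi1⟩).2.1
          (by simp only [Fin.val_mk]; omega)
        rw [hj]
        calc π.val ⟨d - 1, by omega⟩
            = (Rt π).val ⟨(π.val.symm ⟨d - 1, by omega⟩).val + 1, hi1⟩ := e1.symm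
          _ = (Rt π').val ⟨(π.val.symm ⟨d - 1, by omega⟩).val + 1, hi1⟩ :=
            congrArg (fun σ => σ.val ⟨(π.val.symm ⟨d - 1, by omega⟩).val + 1, hi1⟩) h
          _ = π'.val ⟨d - 1, by omega⟩ := e2
  have hbbij : Function.Bijective Rb := Finite.injective_iff_bijective.mp hbinj
  have htbij : Function.Bijective Rt := Finite.injective_iff_bijective.mp htinj
  exact ⟨hbbij, htbij, rauzy_iter_ret Rb hbbij, rauzy_iter_ret Rt htbij⟩
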